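/- Let L be a Lie algebra over a commutative ring R, finitely generated free as an R-module, and let a ∈ R be a non-zero-divisor. If the kernel of the bracket map ⋀² L → L equals the submodule generated by decomposable elements x∧y with [x,y]=0, then the same holds for the Lie subalgebra aL = {ax : x ∈ L}. -/

import Mathlib

open ExteriorAlgebra

/-- The wedge `x ∧ y` as an element of the exterior square `⋀[R]^2 M`. -/
noncomputable def wedge2 (R : Type*) {M : Type*} [CommRing R] [AddCommGroup M] [Module R M]
    (x y : M) : ⋀[R]^2 M :=
  ⟨ExteriorAlgebra.ιMulti R 2 ![x, y],
    ExteriorAlgebra.ιMulti_range R 2 (Set.mem_range_self _)⟩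

/-- The submodule `⋀L ⊆ ⋀²L` generated by the decomposable elements `x∧y` with `⁅x,y⁆ = 0`. -/
noncomputable def wedgeDecomp (R L : Type*) [CommRing R] [LieRing L] [LieAlgebra R L] :
    Submodule R (⋀[R]^2 L) :=
  Submodule.span R {w | ∃ x y : L, ⁅x, y⁆ = 0 ∧ w = wedge2 R x y}

lemma map_mem_exteriorPower {R M N : Type*} [CommRing R] [AddCommGroup M] [Module R M]
    [AddCommGroup N] [Module R N] (f : M →ₗ[R] N) (n : ℕ) {x : ExteriorAlgebra R M}
    (hx : x ∈ ⋀[R]^n M) : ExteriorAlgebra.map f x ∈ ⋀[R]^n N := by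
  rw [← ιMulti_span_fixedDegree] at hx
  induction hx using Submodule.span_induction with
  | mem u hu =>
    obtain ⟨m, rfl⟩ := hu
    rw [map_apply_ιMulti]
    exact ιMulti_range R n (Set.mem_range_self _)
  | zero => simp
  | add x y _ _ hx hy => rw [map_add]; exact add_mem hx hy
  | smul r x _ hx => rw [map_smul]; exact Submodule.smul_mem _ _ hx

lemma wedge2_eta {M : Type*} (m : Fin 2 → M) : ![m 0, m 1] = m := by
  funext i; fin_cases i <;> rfl

lemma wedge2_span (R M : Type*) [CommRing R] [AddCommGroup M] [Module R M] :
    Submodule.span R {w : ⋀[R]^2 M | ∃ x y : M, w = wedge2 R x y} = ⊤ := by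
  rw [eq_top_iff]
  rintro ⟨u, hu⟩ -
  have hle : Submodule.span R (Set.range (ιMulti R 2 (M := M))) ≤
      Submodule.map (⋀[R]^2 M).subtype
        (Submodule.span R {w : ⋀[R]^2 M | ∃ x y : M, w = wedge2 R x y}) := by
    refine Submodule.span_le.2 ?_
    rintro _ ⟨m, rfl⟩
    refine ⟨wedge2 R (m 0) (m 1), Submodule.subset_span ⟨m 0, m 1, rfl⟩, ?_⟩
    show ExteriorAlgebra.ιMulti R 2 ![m 0, m 1] = ExteriorAlgebra.ιMulti R 2 m
    rw [wedge2_eta]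
  rw [← ιMulti_span_fixedDegree] at hu
  obtain ⟨w, hw, hwu⟩ := hle hu
  have : (⟨u, by rw [← ιMulti_span_fixedDegree]; exact hu⟩ : ⋀[R]^2 M) = w :=
    Subtype.ext hwu.symm
  rw [this]
  exact hw

lemma free_smul_eq_zero {R L : Type*} [CommRing R] [AddCommGroup L] [Module R L]
    [Module.Free R L] {a : R} (ha : a ∈ nonZeroDivisors R) {x : L} (h : a • x = 0) : x = 0 := by
  let b := Module.Free.chooseBasis R L
  have h2 := congrArg b.repr h
  rw [map_smul, map_zero] at h2
  have h3 : b.repr x = 0 := by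
    ext i
    have h4 := congrArg (fun f => f i) h2
    simp only [Finsupp.smul_apply, smul_eq_mul, Finsupp.coe_zero, Pi.zero_apply] at h4
    exact ha.2 _ (by rwa [mul_comm])
  simpa using congrArg b.repr.symm h3

theorem stmt2 (R : Type*) [CommRing R] (L : Type*) [LieRing L] [LieAlgebra R L]
    [Module.Free R L] [Module.Finite R L]
    (a : R) (ha : a ∈ nonZeroDivisors R)
    (βL : (⋀[R]^2 L) →ₗ[R] L) (hβL : ∀ x y : L, βL (wedge2 R x y) = ⁅x, y⁆)
    (hL : LinearMap.ker βL = wedgeDecomp R L)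
    (A : LieSubalgebra R L) (hA : ∀ x : L, x ∈ A ↔ ∃ y : L, x = a • y)
    (βA : (⋀[R]^2 A) →ₗ[R] A) (hβA : ∀ x y : A, βA (wedge2 R x y) = ⁅x, y⁆) :
    LinearMap.ker βA = wedgeDecomp R A := by
  -- the isomorphism `f : L ≃ A`, `x ↦ a • x`
  set f : L →ₗ[R] A :=
    { toFun := fun x => ⟨a • x, (hA _).2 ⟨x, rfl⟩⟩
      map_add' := fun x y => Subtype.ext (smul_add a x y)
      map_smul' := fun r x => Subtype.ext (smul_comm a r x) } with hf
  have hfcoe : ∀ x : L, (f x : L) = a • x := fun _ => rfl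
  have hfinj : Function.Injective f := by
    intro x y hxy
    have h1 : a • (x - y) = 0 := by
      rw [smul_sub, sub_eq_zero]
      exact congrArg Subtype.val hxy
    exact sub_eq_zero.mp (free_smul_eq_zero ha h1)
  have hfsurj : Function.Surjective f := by
    intro x'
    obtain ⟨y, hy⟩ := (hA x').1 x'.2
    exact ⟨y, Subtype.ext hy.symm⟩
  set e : L ≃ₗ[R] A := LinearEquiv.ofBijective f ⟨hfinj, hfsurj⟩ with he
  set g : A →ₗ[R] L := (e.symm : A →ₗ[R] L) with hg
  have hgf : ∀ x : L, g (f x) = x := fun x => e.symm_apply_apply x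
  have hfg : ∀ x' : A, f (g x') = x' := fun x' => e.apply_symm_apply x'
  -- induced maps on exterior squares
  set Φ : (⋀[R]^2 L) →ₗ[R] (⋀[R]^2 A) :=
    (ExteriorAlgebra.map f).toLinearMap.restrict
      (fun x hx => map_mem_exteriorPower f 2 hx) with hΦdef
  set Ψ : (⋀[R]^2 A) →ₗ[R] (⋀[R]^2 L) :=
    (ExteriorAlgebra.map g).toLinearMap.restrict
      (fun x hx => map_mem_exteriorPower g 2 hx) with hΨdef
  have hΦcoe : ∀ w : ⋀[R]^2 L, (Φ w : ExteriorAlgebra R A) = ExteriorAlgebra.map f w :=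
    fun _ => rfl
  have hΨcoe : ∀ w : ⋀[R]^2 A, (Ψ w : ExteriorAlgebra R L) = ExteriorAlgebra.map g w :=
    fun _ => rfl
  have hΦw : ∀ x y : L, Φ (wedge2 R x y) = wedge2 R (f x) (f y) := by
    intro x y
    apply Subtype.ext
    rw [hΦcoe]
    show ExteriorAlgebra.map f (ExteriorAlgebra.ιMulti R 2 ![x, y]) =
      ExteriorAlgebra.ιMulti R 2 ![f x, f y]
    rw [map_apply_ιMulti]
    congr 1
    funext i; fin_cases i <;> rfl
  have hΦΨ : ∀ w : ⋀[R]^2 A, Φ (Ψ w) = w := by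
    intro w
    apply Subtype.ext
    rw [hΦcoe, hΨcoe, ← AlgHom.comp_apply, ExteriorAlgebra.map_comp_map]
    have hfg' : f ∘ₗ g = LinearMap.id := LinearMap.ext hfg
    rw [hfg', ExteriorAlgebra.map_id]
    rfl
  -- the bracket identity
  have hbr : ∀ x y : L, ⁅f x, f y⁆ = f (a • ⁅x, y⁆) := by
    intro x y
    apply Subtype.ext
    show ⁅a • x, a • y⁆ = a • (a • ⁅x, y⁆)
    rw [smul_lie, lie_smul]
  -- key identity: βA ∘ Φ = f ∘ (a • βL)
  have key : βA ∘ₗ Φ = f ∘ₗ (a • βL) := by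
    apply LinearMap.ext_on (wedge2_span R L)
    rintro _ ⟨x, y, rfl⟩
    simp only [LinearMap.comp_apply, LinearMap.smul_apply]
    rw [hΦw, hβA, hβL, hbr]
  refine le_antisymm ?_ ?_
  · -- ker βA ≤ wedgeDecomp R A
    intro w' hw'
    rw [LinearMap.mem_ker] at hw'
    have h1 : βA (Φ (Ψ w')) = 0 := by rw [hΦΨ]; exact hw'
    have h2 : f (a • βL (Ψ w')) = 0 := by
      have hk := LinearMap.congr_fun key (Ψ w')
      simp only [LinearMap.comp_apply, LinearMap.smul_apply] at hk
      rw [← hk]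
      exact h1
    have h3 : a • βL (Ψ w') = 0 := hfinj (by rw [h2]; exact (map_zero f).symm)
    have h4 : βL (Ψ w') = 0 := free_smul_eq_zero ha h3
    have h5 : Ψ w' ∈ wedgeDecomp R L := by rw [← hL]; exact h4
    have hΦdec : ∀ w, w ∈ wedgeDecomp R L → Φ w ∈ wedgeDecomp R A := by
      intro w hw
      induction hw using Submodule.span_induction with
      | mem u hu =>
        obtain ⟨x, y, hxy, rfl⟩ := hu
        refine Submodule.subset_span ⟨f x, f y, ?_, hΦw x y⟩
        rw [hbr, hxy, smul_zero, map_zero]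
      | zero => rw [map_zero]; exact Submodule.zero_mem _
      | add u v _ _ hu hv => rw [map_add]; exact Submodule.add_mem _ hu hv
      | smul r u _ hu => rw [map_smul]; exact Submodule.smul_mem _ _ hu
    have h6 := hΦdec _ h5
    rwa [hΦΨ] at h6
  · -- wedgeDecomp R A ≤ ker βA
    refine Submodule.span_le.2 ?_
    rintro _ ⟨x, y, hxy, rfl⟩
    rw [SetLike.mem_coe, LinearMap.mem_ker, hβA, hxy]
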